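/- Interlacing of tropical eigenvalues: in the setting of a rank-n weighted planar network Γ, define λ_i^{(k)} = l_iΓ^{(k)}(ε) − l_{i-1}Γ^{(k)}(ε) whenever these are finite. Then λ_i^{(k+1)} ≥ λ_i^{(k)} ≥ λ_{i+1}^{(k+1)} for all 0 < i ≤ k < n. -/

import Mathlib

open scoped BigOperators

/-- A planar network: a finite graph embedded in the vertical strip
`{a ≤ x ≤ b}` with straight-line, non-vertical edges, oriented from left to
right; edge segments meet only at common endpoints, and no vertex lies in the
interior of an edge. -/
structure PlanarNetwork where
  a : ℝ
  b : ℝ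
  hab : a < b
  V : Finset (ℝ × ℝ)
  E : Finset ((ℝ × ℝ) × (ℝ × ℝ))
  strip : ∀ p ∈ V, a ≤ p.1 ∧ p.1 ≤ b
  ends : ∀ e ∈ E, e.1 ∈ V ∧ e.2 ∈ V ∧ e.1.1 < e.2.1
  embed : ∀ e ∈ E, ∀ f ∈ E, e ≠ f →
    ∀ x ∈ openSegment ℝ e.1 e.2, x ∉ segment ℝ f.1 f.2
  embedV : ∀ e ∈ E, ∀ p ∈ V, p ∉ openSegment ℝ e.1 e.2

/-- The network has `n` sources on the left boundary and `n` sinks on the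
right boundary, at heights `1, …, n`. -/
def PlanarNetwork.HasRank (Γ : PlanarNetwork) (n : ℕ) : Prop :=
  (∀ p ∈ Γ.V, p.1 = Γ.a → ∃ j : ℕ, 1 ≤ j ∧ j ≤ n ∧ p.2 = (j : ℝ)) ∧
  (∀ p ∈ Γ.V, p.1 = Γ.b → ∃ j : ℕ, 1 ≤ j ∧ j ≤ n ∧ p.2 = (j : ℝ)) ∧
  (∀ j : ℕ, 1 ≤ j → j ≤ n →
    (Γ.a, (j : ℝ)) ∈ Γ.V ∧ (Γ.b, (j : ℝ)) ∈ Γ.V)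

/-- The weight of a path (recorded as the list of its vertices): the sum of
the weights of its edges. -/
def pathWeight {α : Type*} [AddCommMonoid α]
    (ε : (ℝ × ℝ) × (ℝ × ℝ) → α) (L : List (ℝ × ℝ)) : α :=
  ((L.zip L.tail).map ε).sum

/-- `L` is a directed path in `Γ` from `p` to `q`. -/
def IsPathBetween (Γ : PlanarNetwork) (p q : ℝ × ℝ) (L : List (ℝ × ℝ)) : Prop :=
  L ≠ [] ∧ List.Chain' (fun u v => (u, v) ∈ Γ.E) L ∧
    L.head? = some p ∧ L.getLast? = some q

/-- `L` is a directed path in `Γ` from a source to a sink. -/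
def IsThroughPath (Γ : PlanarNetwork) (L : List (ℝ × ℝ)) : Prop :=
  ∃ p q, IsPathBetween Γ p q L ∧ p.1 = Γ.a ∧ q.1 = Γ.b

/-- `L` is a source-to-sink path of the subnetwork `Γ^{(k)}` (both endpoints
at height at most `k`). -/
def IsBoundedPath (Γ : PlanarNetwork) (k : ℕ) (L : List (ℝ × ℝ)) : Prop :=
  ∃ p q, IsPathBetween Γ p q L ∧ p.1 = Γ.a ∧ q.1 = Γ.b ∧
    p.2 ≤ (k : ℝ) ∧ q.2 ≤ (k : ℝ)

/-- Pairwise vertex-disjointness of a family of paths. -/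
def PairwiseVertexDisjoint {m : ℕ} (F : Fin m → List (ℝ × ℝ)) : Prop :=
  ∀ j j', j ≠ j' → ∀ v ∈ F j, v ∉ F j'

/-- The set of total weights of `i`-multipaths of `Γ^{(k)}`. -/
def boundedWeights (Γ : PlanarNetwork) (ε : (ℝ × ℝ) × (ℝ × ℝ) → ℝ)
    (i k : ℕ) : Set ℝ :=
  { x | ∃ F : Fin i → List (ℝ × ℝ),
      (∀ j, IsBoundedPath Γ k (F j)) ∧ PairwiseVertexDisjoint F ∧
      x = ∑ j, pathWeight ε (F j) }

/- ### Section A : piecewise-linear evaluation of a path -/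

noncomputable section
open List Set

def interp (u v : ℝ × ℝ) (x : ℝ) : ℝ := u.2 + (x - u.1) * ((v.2 - u.2) / (v.1 - u.1))

def edges (L : List (ℝ × ℝ)) : List ((ℝ × ℝ) × (ℝ × ℝ)) := L.zip L.tail

def ev : List (ℝ × ℝ) → ℝ → ℝ
  | [], _ => 0
  | [u], _ => u.2
  | u :: v :: t, x => if x ≤ v.1 then interp u v x else ev (v :: t) x

def XInc (L : List (ℝ × ℝ)) : Prop := L.Chain' (fun u v => u.1 < v.1)

lemma interp_left (u v : ℝ × ℝ) : interp u v u.1 = u.2 := by simp [interp]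

lemma interp_right (u v : ℝ × ℝ) (h : u.1 < v.1) : interp u v v.1 = v.2 := by
  have h' : v.1 - u.1 ≠ 0 := by linarith
  simp only [interp]; rw [mul_comm, div_mul_cancel₀ _ h']; ring

instance : IsTrans (ℝ × ℝ) (fun u v => u.1 < v.1) := ⟨fun _ _ _ h1 h2 => lt_trans h1 h2⟩

lemma xinc_pairwise {L : List (ℝ × ℝ)} (h : XInc L) :
    L.Pairwise (fun u v => u.1 < v.1) := List.isChain_iff_pairwise.1 h

lemma xinc_tail {L : List (ℝ × ℝ)} (h : XInc L) : XInc L.tail := List.IsChain.tail h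

lemma xinc_head_lt {u v : ℝ × ℝ} {t : List (ℝ × ℝ)} (h : XInc (u :: v :: t)) : u.1 < v.1 :=
  (List.isChain_cons_cons.1 h).1

lemma edges_cons (u v : ℝ × ℝ) (t : List (ℝ × ℝ)) :
    edges (u :: v :: t) = (u, v) :: edges (v :: t) := by simp [edges]

lemma mem_edges {L : List (ℝ × ℝ)} {e : (ℝ × ℝ) × (ℝ × ℝ)} (h : e ∈ edges L) :
    e.1 ∈ L ∧ e.2 ∈ L.tail := List.of_mem_zip (by simpa [edges] using h)

lemma chain'_edges {R : (ℝ × ℝ) → (ℝ × ℝ) → Prop} :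
    ∀ {L : List (ℝ × ℝ)}, L.Chain' R → ∀ e ∈ edges L, R e.1 e.2
  | [], _, e, he => by simp [edges] at he
  | [u], _, e, he => by simp [edges] at he
  | u :: v :: t, h, e, he => by
    rw [edges_cons] at he
    rcases List.mem_cons.1 he with rfl | he
    · exact (List.isChain_cons_cons.1 h).1
    · exact chain'_edges h.tail e he

/-- elements at or after the head have `x ≥` head's `x`. -/
lemma head_le_of_mem {v u : ℝ × ℝ} {t : List (ℝ × ℝ)} (h : XInc (v :: t)) (hu : u ∈ v :: t) :
    v.1 ≤ u.1 := by
  rcases List.mem_cons.1 hu with rfl | hu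
  · exact le_refl _
  · exact le_of_lt (List.rel_of_pairwise_cons (xinc_pairwise h) hu)

lemma eq_head_of_x_eq {v u : ℝ × ℝ} {t : List (ℝ × ℝ)} (h : XInc (v :: t)) (hu : u ∈ v :: t)
    (hx : u.1 = v.1) : u = v := by
  rcases List.mem_cons.1 hu with rfl | hu
  · rfl
  · exact absurd hx (ne_of_gt (List.rel_of_pairwise_cons (xinc_pairwise h) hu))

lemma ev_head : ∀ {t : List (ℝ × ℝ)} (v : ℝ × ℝ), XInc (v :: t) → ev (v :: t) v.1 = v.2
  | [], v, _ => by simp [ev]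
  | w :: t', v, h => by
    have hvw : v.1 ≤ w.1 := le_of_lt (List.isChain_cons_cons.1 h).1
    simp [ev, hvw, interp_left]

lemma ev_pair : ∀ {L : List (ℝ × ℝ)}, XInc L → ∀ e ∈ edges L, ∀ x, e.1.1 ≤ x → x ≤ e.2.1 →
    ev L x = interp e.1 e.2 x
  | [], _, e, he, _, _, _ => by simp [edges] at he
  | [u], _, e, he, _, _, _ => by simp [edges] at he
  | u :: v :: t, h, e, he, x, hx1, hx2 => by
    rw [edges_cons] at he
    have huv : u.1 < v.1 := (List.isChain_cons_cons.1 h).1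
    rcases List.mem_cons.1 he with rfl | he
    · simp [ev, hx2]
    · have he1 : e.1 ∈ v :: t := (mem_edges he).1
      have hev : v.1 ≤ e.1.1 := head_le_of_mem (xinc_tail h) he1
      by_cases hxv : x ≤ v.1
      · have hx : x = v.1 := le_antisymm hxv (le_trans hev hx1)
        have he1' : e.1 = v := eq_head_of_x_eq (xinc_tail h) he1 (le_antisymm (by linarith) hev)
        rw [show ev (u :: v :: t) x = interp u v x by simp [ev, hxv], hx, interp_right u v huv,
          he1', interp_left]
      · rw [show ev (u :: v :: t) x = ev (v :: t) x by simp [ev, hxv]]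
        exact ev_pair (xinc_tail h) e he x hx1 hx2
/- ### Section B : more ev lemmas, continuity, gluing -/

lemma mem_tail_edge : ∀ {L : List (ℝ × ℝ)} {v : ℝ × ℝ}, v ∈ L.tail →
    ∃ u, (u, v) ∈ edges L
  | [], v, hv => by simp at hv
  | [u], v, hv => by simp at hv
  | u :: w :: t, v, hv => by
    rcases List.mem_cons.1 hv with rfl | hv
    · exact ⟨u, by simp [edges_cons]⟩
    · obtain ⟨u', hu'⟩ := mem_tail_edge (L := w :: t) hv
      exact ⟨u', by simp [edges_cons, hu']⟩

lemma ev_vertex {L : List (ℝ × ℝ)} (h : XInc L) {v : ℝ × ℝ} (hv : v ∈ L) :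
    ev L v.1 = v.2 := by
  cases L with
  | nil => simp at hv
  | cons w t =>
    rcases List.mem_cons.1 hv with rfl | hv
    · exact ev_head v h
    · obtain ⟨u, hu⟩ := mem_tail_edge (L := w :: t) hv
      have := ev_pair h (u, v) hu v.1
        (le_of_lt (chain'_edges (h.imp (fun {a b} hab => hab)) (u, v) hu)) (le_refl _)
      rw [this]
      exact interp_right u v (chain'_edges h (u, v) hu)

lemma ev_last {L : List (ℝ × ℝ)} (h : XInc L) (hne : L ≠ []) :
    ev L (L.getLast hne).1 = (L.getLast hne).2 :=
  ev_vertex h (List.getLast_mem hne)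

/-- covering edge for points in the span. -/
lemma covering_pair : ∀ (u w : ℝ × ℝ) (s : List (ℝ × ℝ)) {q : ℝ × ℝ},
    (u :: w :: s : List (ℝ × ℝ)).getLast? = some q → XInc (u :: w :: s) →
    ∀ x, u.1 ≤ x → x ≤ q.1 → ∃ e ∈ edges (u :: w :: s), e.1.1 ≤ x ∧ x ≤ e.2.1
  | u, w, [], q, hq, hinc, x, hx1, hx2 => by
    simp only [List.getLast?_cons_cons, List.getLast?_singleton, Option.some.injEq] at hq
    subst hq
    exact ⟨(u, w), by simp [edges_cons], hx1, hx2⟩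
  | u, w, w' :: s', q, hq, hinc, x, hx1, hx2 => by
    by_cases hxw : x ≤ w.1
    · exact ⟨(u, w), by simp [edges_cons], hx1, hxw⟩
    · obtain ⟨e, he, h1, h2⟩ := covering_pair w w' s'
        (by rw [← List.getLast?_cons_cons (a := u)]; exact hq) (xinc_tail hinc) x
        (le_of_not_ge hxw) hx2
      exact ⟨e, by simp [edges_cons] at he ⊢; tauto, h1, h2⟩

lemma xinc_of_chainE (Γ : PlanarNetwork) {L : List (ℝ × ℝ)}
    (h : L.Chain' (fun u v => (u, v) ∈ Γ.E)) : XInc L :=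
  h.imp (fun {u v} huv => (Γ.ends _ huv).2.2)

lemma cont_ev : ∀ {L : List (ℝ × ℝ)}, XInc L → Continuous (ev L)
  | [], _ => by rw [show ev [] = fun _ => (0:ℝ) from rfl]; exact continuous_const
  | [u], _ => by rw [show ev [u] = fun _ => u.2 from rfl]; exact continuous_const
  | u :: v :: t, h => by
    have h1 : Continuous (ev (v :: t)) := cont_ev (xinc_tail h)
    have h2 : Continuous (interp u v) := by
      rw [show interp u v = fun x => u.2 + (x - u.1) * ((v.2 - u.2) / (v.1 - u.1)) from rfl]
      fun_prop
    rw [show ev (u :: v :: t) = fun x => if x ≤ v.1 then interp u v x else ev (v :: t) x from rfl]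
    refine Continuous.if_le h2 h1 continuous_id continuous_const ?_
    rintro x rfl
    rw [interp_right u v (List.isChain_cons_cons.1 h).1, ev_head v (xinc_tail h)]

/-- weights add along edge-decompositions -/
lemma edges_glue : ∀ (l1 : List (ℝ × ℝ)) (v : ℝ × ℝ) (t : List (ℝ × ℝ)),
    edges (l1 ++ v :: t) = edges (l1 ++ [v]) ++ edges (v :: t)
  | [], v, t => by simp [edges]
  | [u], v, t => by simp [edges]
  | u :: w :: s, v, t => by
    have := edges_glue (w :: s) v t
    simp only [List.cons_append, edges_cons] at *
    rw [this]

lemma pathWeight_glue {α : Type*} [AddCommMonoid α] (ε : (ℝ × ℝ) × (ℝ × ℝ) → α)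
    (l1 : List (ℝ × ℝ)) (v : ℝ × ℝ) (t : List (ℝ × ℝ)) :
    pathWeight ε (l1 ++ v :: t) = pathWeight ε (l1 ++ [v]) + pathWeight ε (v :: t) := by
  rw [pathWeight, pathWeight, pathWeight, show ∀ M, M.zip M.tail = edges M from fun _ => rfl,
    show ∀ M, M.zip M.tail = edges M from fun _ => rfl,
    show ∀ M, M.zip M.tail = edges M from fun _ => rfl, edges_glue, List.map_append,
    List.sum_append]

/-- evaluation of a glued path -/
lemma ev_glue : ∀ (l1 : List (ℝ × ℝ)) (u v : ℝ × ℝ) (t : List (ℝ × ℝ)),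
    XInc (u :: l1 ++ v :: t) → ∀ x,
    (x ≤ v.1 → ev (u :: l1 ++ v :: t) x = ev (u :: l1 ++ [v]) x) ∧
    (v.1 ≤ x → ev (u :: l1 ++ v :: t) x = ev (v :: t) x)
  | [], u, v, t, h, x => by
    constructor
    · intro hx; simp [ev, hx]
    · intro hx
      by_cases hxv : x ≤ v.1
      · have hx' : x = v.1 := le_antisymm hxv hx
        rw [hx', show ev (u :: [] ++ v :: t) v.1 = interp u v v.1 by simp [ev],
          interp_right u v (xinc_head_lt (show XInc (u :: v :: t) by simpa using h)),
          ev_head v (by simpa using xinc_tail h)]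
      · simp [ev, hxv]
  | w :: s, u, v, t, h, x => by
    have hwv : w.1 < v.1 := by
      have hp := xinc_pairwise (xinc_tail h)
      exact List.rel_of_pairwise_cons hp (by simp : v ∈ s ++ v :: t)
    have IH := ev_glue s w v t (by simpa using xinc_tail h) x
    constructor
    · intro hx
      by_cases hxw : x ≤ w.1
      · simp [ev, hxw]
      · rw [show ev (u :: (w :: s) ++ v :: t) x = ev (w :: s ++ v :: t) x by simp [ev, hxw],
          show ev (u :: (w :: s) ++ [v]) x = ev (w :: s ++ [v]) x by simp [ev, hxw]]
        exact IH.1 hx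
    · intro hx
      have hxw : ¬ x ≤ w.1 := by push_neg; linarith
      rw [show ev (u :: (w :: s) ++ v :: t) x = ev (w :: s ++ v :: t) x by simp [ev, hxw]]
      exact IH.2 hx
/- ### Section C : segment algebra and planar geometry -/

def img (L : List (ℝ × ℝ)) : Set (ℝ × ℝ) := {z | ∃ e ∈ edges L, z ∈ segment ℝ e.1 e.2}

lemma seg_param {u v : ℝ × ℝ} (h : u.1 < v.1) {x : ℝ} (hx1 : u.1 ≤ x) (hx2 : x ≤ v.1) :
    (x, interp u v x) ∈ segment ℝ u v := by
  rw [segment_eq_image']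
  refine ⟨(x - u.1) / (v.1 - u.1), ⟨div_nonneg (by linarith) (by linarith), by
    rw [div_le_one (by linarith)]; linarith⟩, ?_⟩
  have hvu : v.1 - u.1 ≠ 0 := by linarith
  apply Prod.ext
  · simp only [Prod.fst_add, Prod.smul_fst, Prod.fst_sub, smul_eq_mul]
    field_simp
    ring
  · simp only [Prod.snd_add, Prod.smul_snd, Prod.snd_sub, interp, smul_eq_mul]
    field_simp

lemma seg_param' {u v : ℝ × ℝ} (h : u.1 < v.1) {z : ℝ × ℝ} (hz : z ∈ segment ℝ u v) :
    u.1 ≤ z.1 ∧ z.1 ≤ v.1 ∧ z.2 = interp u v z.1 := by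
  rw [segment_eq_image'] at hz
  obtain ⟨θ, ⟨h0, h1⟩, rfl⟩ := hz
  have hvu : v.1 - u.1 ≠ 0 := by linarith
  simp only [Prod.fst_add, Prod.smul_fst, Prod.fst_sub, Prod.snd_add, Prod.smul_snd,
    Prod.snd_sub, smul_eq_mul]
  refine ⟨by nlinarith, by nlinarith, ?_⟩
  rw [interp]
  field_simp
  ring

lemma mem_img_of_ev {L : List (ℝ × ℝ)} (u w : ℝ × ℝ) (s : List (ℝ × ℝ)) (hL : L = u :: w :: s)
    {q : ℝ × ℝ} (hq : L.getLast? = some q) (h : XInc L) {x : ℝ} (hx1 : u.1 ≤ x)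
    (hx2 : x ≤ q.1) : (x, ev L x) ∈ img L := by
  subst hL
  obtain ⟨e, he, h1, h2⟩ := covering_pair u w s hq h x hx1 hx2
  have hlt : e.1.1 < e.2.1 := chain'_edges (h.imp (fun {a b} hab => hab)) e he
  refine ⟨e, he, ?_⟩
  rw [ev_pair h e he x h1 h2]
  exact seg_param hlt h1 h2

lemma mem_of_mem_edges_fst {L : List (ℝ × ℝ)} {e} (h : e ∈ edges L) : e.1 ∈ L :=
  (mem_edges h).1

lemma mem_of_mem_edges_snd {L : List (ℝ × ℝ)} {e} (h : e ∈ edges L) : e.2 ∈ L :=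
  List.mem_of_mem_tail (mem_edges h).2

/-- the strong planarity lemma: the images of two paths can only meet at a common
vertex or along a common edge. -/
lemma img_inter (Γ : PlanarNetwork) {P Q : List (ℝ × ℝ)}
    (hP : P.Chain' (fun u v => (u, v) ∈ Γ.E)) (hQ : Q.Chain' (fun u v => (u, v) ∈ Γ.E))
    {z : ℝ × ℝ} (hzP : z ∈ img P) (hzQ : z ∈ img Q) :
    (∃ w, w ∈ P ∧ w ∈ Q ∧ z = w) ∨
    (∃ e, e ∈ edges P ∧ e ∈ edges Q ∧ z ∈ segment ℝ e.1 e.2) := by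
  obtain ⟨e, he, hze⟩ := hzP
  obtain ⟨f, hf, hzf⟩ := hzQ
  have heE : e ∈ Γ.E := chain'_edges hP e he
  have hfE : f ∈ Γ.E := chain'_edges hQ f hf
  by_cases hef : e = f
  · exact Or.inr ⟨e, he, hef ▸ hf, hze⟩
  · have hze' : z = e.1 ∨ z = e.2 := by
      rw [← insert_endpoints_openSegment] at hze
      rcases hze with h | h | h
      · exact Or.inl h
      · exact Or.inr h
      · exact absurd hzf (Γ.embed e heE f hfE hef z h)
    have hzV : z ∈ Γ.V := by
      rcases hze' with rfl | rfl
      · exact (Γ.ends e heE).1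
      · exact (Γ.ends e heE).2.1
    have hzf' : z = f.1 ∨ z = f.2 := by
      rw [← insert_endpoints_openSegment] at hzf
      rcases hzf with h | h | h
      · exact Or.inl h
      · exact Or.inr h
      · exact absurd h (Γ.embedV f hfE z hzV)
    have hzP' : z ∈ P := by
      rcases hze' with rfl | rfl
      · exact mem_of_mem_edges_fst he
      · exact mem_of_mem_edges_snd he
    have hzQ' : z ∈ Q := by
      rcases hzf' with rfl | rfl
      · exact mem_of_mem_edges_fst hf
      · exact mem_of_mem_edges_snd hf
    exact Or.inl ⟨z, hzP', hzQ', rfl⟩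

lemma edges_split : ∀ {L : List (ℝ × ℝ)} {e}, e ∈ edges L →
    ∃ l1 l2, L = l1 ++ e.1 :: e.2 :: l2
  | [], e, he => by simp [edges] at he
  | [u], e, he => by simp [edges] at he
  | u :: v :: t, e, he => by
    rw [edges_cons] at he
    rcases List.mem_cons.1 he with rfl | he
    · exact ⟨[], t, rfl⟩
    · obtain ⟨l1, l2, h⟩ := edges_split he
      exact ⟨u :: l1, l2, by rw [List.cons_append, ← h]⟩

lemma mem_le_last : ∀ {L : List (ℝ × ℝ)} (h : XInc L) (hne : L ≠ []) {v : ℝ × ℝ}, v ∈ L →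
    v.1 ≤ (L.getLast hne).1
  | [], _, hne, _, _ => absurd rfl hne
  | [u], _, _, v, hv => by simp at hv; simp [hv]
  | u :: w :: t, h, _, v, hv => by
    rw [List.getLast_cons (by simp)]
    rcases List.mem_cons.1 hv with rfl | hv
    · calc v.1 ≤ w.1 := le_of_lt (xinc_head_lt h)
        _ ≤ ((w :: t).getLast (by simp)).1 := mem_le_last (xinc_tail h) (by simp) (by simp)
    · exact mem_le_last (xinc_tail h) (by simp) hv

/-- a path whose head and last form an edge is that single edge. -/
lemma path_eq_pair {L : List (ℝ × ℝ)} (h : XInc L) {u v : ℝ × ℝ}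
    (he : (u, v) ∈ edges L) (hu : L.head? = some u) (hv : L.getLast? = some v) :
    L = [u, v] := by
  obtain ⟨l1, l2, hL⟩ := edges_split he
  have hl1 : l1 = [] := by
    cases l1 with
    | nil => rfl
    | cons w s =>
      exfalso
      rw [hL] at hu h
      simp only [List.cons_append, List.head?_cons, Option.some.injEq] at hu
      have : w.1 < u.1 := by
        have hp := xinc_pairwise h
        exact List.rel_of_pairwise_cons hp (by simp)
      rw [hu] at this
      exact lt_irrefl _ this
  subst hl1
  simp only [List.nil_append] at hL
  have hl2 : l2 = [] := by
    cases l2 with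
    | nil => rfl
    | cons w s =>
      exfalso
      rw [hL] at hv h
      have hlast := List.getLast?_eq_getLast (l := u :: v :: w :: s) (by simp)
      rw [hlast, Option.some.injEq] at hv
      have hmem : ((u :: v :: w :: s).getLast (by simp)) ∈ w :: s := by
        rw [List.getLast_cons (by simp), List.getLast_cons (by simp)]
        exact List.getLast_mem _
      have : v.1 < ((u :: v :: w :: s).getLast (by simp)).1 := by
        have hp := xinc_pairwise (xinc_tail h)
        exact List.rel_of_pairwise_cons hp (by simpa using hmem)
      rw [← hv] at this
      exact lt_irrefl _ this
  rw [hL, hl2]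
/- ### Section D : path-between helpers, equal-value lemma, sign dichotomy -/

lemma ipb_ne {Γ : PlanarNetwork} {p q : ℝ × ℝ} {L : List (ℝ × ℝ)}
    (h : IsPathBetween Γ p q L) : L ≠ [] := h.1

lemma ipb_xinc {Γ : PlanarNetwork} {p q : ℝ × ℝ} {L : List (ℝ × ℝ)}
    (h : IsPathBetween Γ p q L) : XInc L := xinc_of_chainE Γ h.2.1

lemma ipb_head_mem {Γ : PlanarNetwork} {p q : ℝ × ℝ} {L : List (ℝ × ℝ)}
    (h : IsPathBetween Γ p q L) : p ∈ L :=
  List.mem_of_mem_head? (by simp [h.2.2.1])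

lemma ipb_last_eq {Γ : PlanarNetwork} {p q : ℝ × ℝ} {L : List (ℝ × ℝ)}
    (h : IsPathBetween Γ p q L) : L.getLast h.1 = q := by
  have h2 := h.2.2.2
  rw [List.getLast?_eq_getLast (l := L) h.1] at h2
  exact Option.some_injective _ h2

lemma ipb_last_mem {Γ : PlanarNetwork} {p q : ℝ × ℝ} {L : List (ℝ × ℝ)}
    (h : IsPathBetween Γ p q L) : q ∈ L := by
  rw [← ipb_last_eq h]; exact List.getLast_mem h.1

lemma ipb_shape {Γ : PlanarNetwork} {p q : ℝ × ℝ} {L : List (ℝ × ℝ)}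
    (h : IsPathBetween Γ p q L) : ∃ t, L = p :: t := by
  cases L with
  | nil => exact absurd rfl h.1
  | cons w t =>
    have := h.2.2.1
    simp only [List.head?_cons, Option.some.injEq] at this
    exact ⟨t, by rw [this]⟩

lemma ipb_shape2 {Γ : PlanarNetwork} {p q : ℝ × ℝ} {L : List (ℝ × ℝ)}
    (h : IsPathBetween Γ p q L) (hpq : p ≠ q) : ∃ w s, L = p :: w :: s := by
  obtain ⟨t, rfl⟩ := ipb_shape h
  cases t with
  | nil =>
    have := ipb_last_eq h
    simp only [List.getLast_singleton] at this
    exact absurd this hpq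
  | cons w s => exact ⟨w, s, rfl⟩

lemma ipb_mem_x {Γ : PlanarNetwork} {p q : ℝ × ℝ} {L : List (ℝ × ℝ)}
    (h : IsPathBetween Γ p q L) {v : ℝ × ℝ} (hv : v ∈ L) : p.1 ≤ v.1 ∧ v.1 ≤ q.1 := by
  obtain ⟨t, rfl⟩ := ipb_shape h
  refine ⟨head_le_of_mem (ipb_xinc h) hv, ?_⟩
  have := mem_le_last (ipb_xinc h) h.1 hv
  rwa [ipb_last_eq h] at this

lemma ipb_ev_head {Γ : PlanarNetwork} {p q : ℝ × ℝ} {L : List (ℝ × ℝ)}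
    (h : IsPathBetween Γ p q L) : ev L p.1 = p.2 := ev_vertex (ipb_xinc h) (ipb_head_mem h)

lemma ipb_ev_last {Γ : PlanarNetwork} {p q : ℝ × ℝ} {L : List (ℝ × ℝ)}
    (h : IsPathBetween Γ p q L) : ev L q.1 = q.2 := ev_vertex (ipb_xinc h) (ipb_last_mem h)

lemma eq_last_of_x_eq : ∀ {L : List (ℝ × ℝ)} (h : XInc L) (hne : L ≠ []) {v : ℝ × ℝ},
    v ∈ L → v.1 = (L.getLast hne).1 → v = L.getLast hne
  | [], _, hne, _, _, _ => absurd rfl hne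
  | [u], _, _, v, hv, hx => by simp at hv; simp [hv]
  | u :: w :: t, h, _, v, hv, hx => by
    rw [List.getLast_cons (by simp)] at hx ⊢
    rcases List.mem_cons.1 hv with rfl | hv
    · exfalso
      have h1 : v.1 < w.1 := xinc_head_lt h
      have h2 : w.1 ≤ ((w :: t).getLast (by simp)).1 :=
        mem_le_last (xinc_tail h) (by simp) (by simp)
      rw [hx] at h1; linarith
    · exact eq_last_of_x_eq (xinc_tail h) (by simp) hv hx

lemma ipb_mem_img {Γ : PlanarNetwork} {p q : ℝ × ℝ} {L : List (ℝ × ℝ)}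
    (h : IsPathBetween Γ p q L) (hpq : p.1 < q.1) {x : ℝ} (hx1 : p.1 ≤ x) (hx2 : x ≤ q.1) :
    (x, ev L x) ∈ img L := by
  obtain ⟨w, s, hL⟩ := ipb_shape2 h (fun hh => by rw [hh] at hpq; exact lt_irrefl _ hpq)
  exact mem_img_of_ev p w s hL (hL ▸ h.2.2.2) (ipb_xinc h) hx1 hx2

/-- if two paths take equal values at `x`, they share a vertex at `x` or a common edge
whose span contains `x`. -/
lemma eq_val (Γ : PlanarNetwork) {P Q : List (ℝ × ℝ)} {pP qP pQ qQ : ℝ × ℝ}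
    (hP : IsPathBetween Γ pP qP P) (hQ : IsPathBetween Γ pQ qQ Q)
    (hpq : pP.1 < qP.1) (hpq' : pQ.1 < qQ.1) {x : ℝ}
    (hxP1 : pP.1 ≤ x) (hxP2 : x ≤ qP.1) (hxQ1 : pQ.1 ≤ x) (hxQ2 : x ≤ qQ.1)
    (heq : ev P x = ev Q x) :
    (∃ w, w ∈ P ∧ w ∈ Q ∧ w.1 = x) ∨
    (∃ e, e ∈ edges P ∧ e ∈ edges Q ∧ e.1.1 ≤ x ∧ x ≤ e.2.1) := by
  have hzP : (x, ev P x) ∈ img P := ipb_mem_img hP hpq hxP1 hxP2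
  have hzQ : (x, ev P x) ∈ img Q := by rw [heq]; exact ipb_mem_img hQ hpq' hxQ1 hxQ2
  rcases img_inter Γ hP.2.1 hQ.2.1 hzP hzQ with ⟨w, hwP, hwQ, hzw⟩ | ⟨e, heP, heQ, hz⟩
  · exact Or.inl ⟨w, hwP, hwQ, by rw [← hzw]⟩
  · have hlt : e.1.1 < e.2.1 := chain'_edges (ipb_xinc hP) e heP
    obtain ⟨h1, h2, _⟩ := seg_param' hlt hz
    exact Or.inr ⟨e, heP, heQ, h1, h2⟩

/-- continuous functions which never agree on an open interval are comparable on the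
closed interval. -/
lemma sign_dichotomy {f g : ℝ → ℝ} (hf : Continuous f) (hg : Continuous g) {c d : ℝ}
    (hcd : c < d) (hne : ∀ x ∈ Set.Ioo c d, f x ≠ g x) :
    (∀ x ∈ Set.Icc c d, f x ≤ g x) ∨ (∀ x ∈ Set.Icc c d, g x ≤ f x) := by
  have main : (∀ x ∈ Set.Ioo c d, f x ≤ g x) ∨ (∀ x ∈ Set.Ioo c d, g x ≤ f x) := by
    by_contra hcon
    push_neg at hcon
    obtain ⟨⟨x1, hx1, hfg1⟩, x2, hx2, hfg2⟩ := hcon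
    have h0' : (0:ℝ) ∈ Set.Icc (f x2 - g x2) (f x1 - g x1) := ⟨by linarith, by linarith⟩
    rcases le_total x1 x2 with h | h
    · obtain ⟨y, hy, hy0⟩ := intermediate_value_Icc' h ((hf.sub hg).continuousOn) h0'
      have hyI : y ∈ Set.Ioo c d :=
        ⟨lt_of_lt_of_le hx1.1 hy.1, lt_of_le_of_lt hy.2 hx2.2⟩
      exact hne y hyI (by simpa [sub_eq_zero] using hy0)
    · obtain ⟨y, hy, hy0⟩ := intermediate_value_Icc h ((hf.sub hg).continuousOn) h0'
      have hyI : y ∈ Set.Ioo c d :=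
        ⟨lt_of_lt_of_le hx2.1 hy.1, lt_of_le_of_lt hy.2 hx1.2⟩
      exact hne y hyI (by simpa [sub_eq_zero] using hy0)
  have hclos : Set.Icc c d = closure (Set.Ioo c d) := (closure_Ioo (ne_of_lt hcd)).symm
  rcases main with h | h
  · left
    intro x hx
    rw [hclos] at hx
    exact (IsClosed.closure_subset_iff (isClosed_le hf hg)).2 (fun y hy => h y hy) hx
  · right
    intro x hx
    rw [hclos] at hx
    exact (IsClosed.closure_subset_iff (isClosed_le hg hf)).2 (fun y hy => h y hy) hx
/- ### Section E : gluing and the exchange (min/max) lemma -/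

lemma glue_paths (Γ : PlanarNetwork) (ε : (ℝ × ℝ) × (ℝ × ℝ) → ℝ)
    {R1 R2 : List (ℝ × ℝ)} {p v q : ℝ × ℝ}
    (h1 : IsPathBetween Γ p v R1) (h2 : IsPathBetween Γ v q R2)
    (hx1 : p.1 < v.1) (hx2 : v.1 < q.1) :
    ∃ R, IsPathBetween Γ p q R ∧ pathWeight ε R = pathWeight ε R1 + pathWeight ε R2 ∧
      (∀ x, x ≤ v.1 → ev R x = ev R1 x) ∧ (∀ x, v.1 ≤ x → ev R x = ev R2 x) := by
  obtain ⟨w1, s1, hR1s⟩ := ipb_shape2 h1 (fun hh => by rw [hh] at hx1; exact lt_irrefl _ hx1)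
  obtain ⟨w2, s2, hR2s⟩ := ipb_shape2 h2 (fun hh => by rw [hh] at hx2; exact lt_irrefl _ hx2)
  set l1 := (w1 :: s1).dropLast with hl1
  have hR1eq : R1 = (p :: l1) ++ [v] := by
    have hne : R1 ≠ [] := h1.1
    have h := List.dropLast_append_getLast hne
    rw [ipb_last_eq h1] at h
    conv_lhs => rw [← h]
    rw [hR1s]
    rfl
  have hchain := h1.2.1
  rw [hR1eq, List.Chain', List.isChain_append] at hchain
  obtain ⟨hc1, _, hc3⟩ := hchain
  have hcR : List.Chain' (fun u v => (u, v) ∈ Γ.E) ((p :: l1) ++ v :: w2 :: s2) := by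
    rw [List.Chain', List.isChain_append]
    refine ⟨hc1, by rw [← hR2s]; exact h2.2.1, ?_⟩
    intro y hy z hz
    simp only [List.head?_cons, Option.mem_def, Option.some.injEq] at hz
    subst hz
    exact hc3 y hy v rfl
  have hIPB : IsPathBetween Γ p q ((p :: l1) ++ v :: w2 :: s2) :=
    ⟨by simp, hcR, by simp, by
      rw [List.getLast?_append_of_ne_nil _ (by simp), ← hR2s]; exact h2.2.2.2⟩
  have hXR : XInc ((p :: l1) ++ v :: w2 :: s2) := xinc_of_chainE Γ hcR
  refine ⟨(p :: l1) ++ v :: w2 :: s2, hIPB, ?_, ?_, ?_⟩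
  · rw [show (p :: l1) ++ v :: w2 :: s2 = p :: l1 ++ v :: w2 :: s2 from rfl,
      pathWeight_glue ε (p :: l1) v (w2 :: s2), ← hR1eq, ← hR2s]
  · intro x hx
    rw [hR1eq]
    exact (ev_glue l1 p v (w2 :: s2) hXR x).1 hx
  · intro x hx
    rw [hR2s]
    exact (ev_glue l1 p v (w2 :: s2) hXR x).2 hx

lemma exch (Γ : PlanarNetwork) (ε : (ℝ × ℝ) × (ℝ × ℝ) → ℝ) :
    ∀ (N : ℕ) (P Q : List (ℝ × ℝ)) (pP qP pQ qQ : ℝ × ℝ),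
    P.length + Q.length ≤ N →
    IsPathBetween Γ pP qP P → IsPathBetween Γ pQ qQ Q →
    pP.1 = pQ.1 → qP.1 = qQ.1 → pP.1 < qP.1 →
    ∃ R S pR qR pS qS, IsPathBetween Γ pR qR R ∧ IsPathBetween Γ pS qS S ∧
      (pR = pP ∨ pR = pQ) ∧ (pS = pP ∨ pS = pQ) ∧ (qR = qP ∨ qR = qQ) ∧ (qS = qP ∨ qS = qQ) ∧
      pathWeight ε R + pathWeight ε S = pathWeight ε P + pathWeight ε Q ∧
      ∀ x, pP.1 ≤ x → x ≤ qP.1 →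
        ev R x = min (ev P x) (ev Q x) ∧ ev S x = max (ev P x) (ev Q x) := by
  intro N
  induction N with
  | zero =>
    intro P Q pP qP pQ qQ hlen hP _ _ _ _
    exfalso
    have := List.length_pos_iff.2 hP.1
    omega
  | succ N ih =>
    intro P Q pP qP pQ qQ hlen hP hQ hpp hqq hpq
    have hpq' : pQ.1 < qQ.1 := by rw [← hpp, ← hqq]; exact hpq
    by_cases hPQ : P = Q
    · refine ⟨P, Q, pP, qP, pQ, qQ, hP, hQ, Or.inl rfl, Or.inr rfl, Or.inl rfl, Or.inr rfl,
        rfl, ?_⟩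
      intro x _ _
      rw [hPQ, min_self, max_self]
      exact ⟨rfl, rfl⟩
    by_cases hint : ∃ v, v ∈ P ∧ v ∈ Q ∧ pP.1 < v.1 ∧ v.1 < qP.1
    · -- split at an interior common vertex and recurse
      obtain ⟨v, hvP, hvQ, hv1, hv2⟩ := hint
      obtain ⟨P1, P2, rfl⟩ := List.append_of_mem hvP
      obtain ⟨Q1, Q2, rfl⟩ := List.append_of_mem hvQ
      have hP1 : P1 ≠ [] := by
        rintro rfl
        obtain ⟨t, ht⟩ := ipb_shape hP
        simp only [List.nil_append, List.cons.injEq] at ht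
        rw [ht.1] at hv1
        exact lt_irrefl _ hv1
      have hQ1 : Q1 ≠ [] := by
        rintro rfl
        obtain ⟨t, ht⟩ := ipb_shape hQ
        simp only [List.nil_append, List.cons.injEq] at ht
        rw [ht.1] at hv1
        rw [hpp] at hv1
        exact lt_irrefl _ hv1
      have hP2 : P2 ≠ [] := by
        rintro rfl
        have h2 := hP.2.2.2
        rw [show P1 ++ [v] = P1 ++ [v] from rfl, List.getLast?_concat] at h2
        simp only [Option.some.injEq] at h2
        rw [← h2] at hv2
        exact lt_irrefl _ hv2
      have hQ2 : Q2 ≠ [] := by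
        rintro rfl
        have h2 := hQ.2.2.2
        rw [List.getLast?_concat] at h2
        simp only [Option.some.injEq] at h2
        rw [hqq, ← h2] at hv2
        exact lt_irrefl _ hv2
      have hcP := hP.2.1
      rw [List.Chain', List.isChain_append] at hcP
      obtain ⟨hcP1, hcP2, hcP3⟩ := hcP
      have hcQ := hQ.2.1
      rw [List.Chain', List.isChain_append] at hcQ
      obtain ⟨hcQ1, hcQ2, hcQ3⟩ := hcQ
      have hPa : IsPathBetween Γ pP v (P1 ++ [v]) := by
        refine ⟨by simp [hP1], ?_, ?_, List.getLast?_concat⟩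
        · rw [List.Chain', List.isChain_append]
          refine ⟨hcP1, List.isChain_singleton _, ?_⟩
          intro y hy z hz
          simp only [List.head?_cons, Option.mem_def, Option.some.injEq] at hz
          subst hz
          exact hcP3 y hy v rfl
        · rw [List.head?_append_of_ne_nil _ hP1,
            ← List.head?_append_of_ne_nil P1 (l₂ := v :: P2) hP1]
          exact hP.2.2.1
      have hQa : IsPathBetween Γ pQ v (Q1 ++ [v]) := by
        refine ⟨by simp [hQ1], ?_, ?_, List.getLast?_concat⟩
        · rw [List.Chain', List.isChain_append]
          refine ⟨hcQ1, List.isChain_singleton _, ?_⟩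
          intro y hy z hz
          simp only [List.head?_cons, Option.mem_def, Option.some.injEq] at hz
          subst hz
          exact hcQ3 y hy v rfl
        · rw [List.head?_append_of_ne_nil _ hQ1,
            ← List.head?_append_of_ne_nil Q1 (l₂ := v :: Q2) hQ1]
          exact hQ.2.2.1
      have hPb : IsPathBetween Γ v qP (v :: P2) := by
        refine ⟨by simp, hcP2, by simp, ?_⟩
        rw [← List.getLast?_append_of_ne_nil P1 (l₂ := v :: P2) (by simp)]
        exact hP.2.2.2
      have hQb : IsPathBetween Γ v qQ (v :: Q2) := by
        refine ⟨by simp, hcQ2, by simp, ?_⟩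
        rw [← List.getLast?_append_of_ne_nil Q1 (l₂ := v :: Q2) (by simp)]
        exact hQ.2.2.2
      have hlen1 : (P1 ++ [v]).length + (Q1 ++ [v]).length ≤ N := by
        simp only [List.length_append, List.length_cons, List.length_nil] at hlen ⊢
        have := List.length_pos_iff.2 hP2
        have := List.length_pos_iff.2 hQ2
        omega
      have hlen2 : (v :: P2).length + (v :: Q2).length ≤ N := by
        simp only [List.length_append, List.length_cons, List.length_nil] at hlen ⊢
        have := List.length_pos_iff.2 hP1
        have := List.length_pos_iff.2 hQ1
        omega
      obtain ⟨R1, S1, pR1, qR1, pS1, qS1, hR1, hS1, hpR1, hpS1, hqR1, hqS1, hw1, he1⟩ :=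
        ih (P1 ++ [v]) (Q1 ++ [v]) pP v pQ v hlen1 hPa hQa hpp rfl hv1
      obtain ⟨R2, S2, pR2, qR2, pS2, qS2, hR2, hS2, hpR2, hpS2, hqR2, hqS2, hw2, he2⟩ :=
        ih (v :: P2) (v :: Q2) v qP v qQ hlen2 hPb hQb rfl hqq hv2
      have hqR1v : qR1 = v := by rcases hqR1 with h | h <;> exact h
      have hqS1v : qS1 = v := by rcases hqS1 with h | h <;> exact h
      have hpR2v : pR2 = v := by rcases hpR2 with h | h <;> exact h
      have hpS2v : pS2 = v := by rcases hpS2 with h | h <;> exact h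
      rw [hqR1v] at hR1
      rw [hqS1v] at hS1
      rw [hpR2v] at hR2
      rw [hpS2v] at hS2
      have hpR1x : pR1.1 = pP.1 := by rcases hpR1 with h | h <;> rw [h]; rw [← hpp]
      have hpS1x : pS1.1 = pP.1 := by rcases hpS1 with h | h <;> rw [h]; rw [← hpp]
      have hqR2x : qR2.1 = qP.1 := by rcases hqR2 with h | h <;> rw [h]; rw [← hqq]
      have hqS2x : qS2.1 = qP.1 := by rcases hqS2 with h | h <;> rw [h]; rw [← hqq]
      obtain ⟨R, hR, hRw, hRl, hRr⟩ := glue_paths Γ ε hR1 hR2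
        (by rw [hpR1x]; exact hv1) (by rw [hqR2x]; exact hv2)
      obtain ⟨S, hS, hSw, hSl, hSr⟩ := glue_paths Γ ε hS1 hS2
        (by rw [hpS1x]; exact hv1) (by rw [hqS2x]; exact hv2)
      -- evaluation of P and Q on the two halves
      obtain ⟨uP, lP, rfl⟩ := List.exists_cons_of_ne_nil hP1
      obtain ⟨uQ, lQ, rfl⟩ := List.exists_cons_of_ne_nil hQ1
      have hglP := ev_glue lP uP v P2 (ipb_xinc hP)
      have hglQ := ev_glue lQ uQ v Q2 (ipb_xinc hQ)
      refine ⟨R, S, pR1, qR2, pS1, qS2, hR, hS, hpR1, hpS1, hqR2, hqS2, ?_, ?_⟩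
      · rw [hRw, hSw,
          show pathWeight ε ((uP :: lP) ++ v :: P2)
            = pathWeight ε ((uP :: lP) ++ [v]) + pathWeight ε (v :: P2) from
            pathWeight_glue ε (uP :: lP) v P2,
          show pathWeight ε ((uQ :: lQ) ++ v :: Q2)
            = pathWeight ε ((uQ :: lQ) ++ [v]) + pathWeight ε (v :: Q2) from
            pathWeight_glue ε (uQ :: lQ) v Q2]
        linarith [hw1, hw2]
      · intro x hxl hxr
        by_cases hxv : x ≤ v.1
        · rw [hRl x hxv, hSl x hxv, (hglP x).1 hxv, (hglQ x).1 hxv]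
          exact he1 x hxl hxv
        · have hxv' : v.1 ≤ x := le_of_not_ge hxv
          rw [hRr x hxv', hSr x hxv', (hglP x).2 hxv', (hglQ x).2 hxv']
          exact he2 x hxv' hxr
    · -- no interior common vertex: the two paths are comparable
      have key : ∀ x ∈ Set.Ioo pP.1 qP.1, ev P x ≠ ev Q x := by
        intro x hx heq
        rcases eq_val Γ hP hQ hpq hpq' (le_of_lt hx.1) (le_of_lt hx.2)
          (by rw [← hpp]; exact le_of_lt hx.1) (by rw [← hqq]; exact le_of_lt hx.2) heq with
          ⟨w, hwP, hwQ, hwx⟩ | ⟨e, heP, heQ, he1, he2⟩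
        · exact hint ⟨w, hwP, hwQ, by rw [hwx]; exact hx.1, by rw [hwx]; exact hx.2⟩
        · have he1P : e.1 ∈ P := mem_of_mem_edges_fst heP
          have he1Q : e.1 ∈ Q := mem_of_mem_edges_fst heQ
          have he2P : e.2 ∈ P := mem_of_mem_edges_snd heP
          have he2Q : e.2 ∈ Q := mem_of_mem_edges_snd heQ
          have hx1 : e.1.1 = pP.1 := by
            rcases lt_or_ge pP.1 e.1.1 with h | h
            · exact absurd ⟨e.1, he1P, he1Q, h, lt_of_le_of_lt he1 hx.2⟩ hint
            · exact le_antisymm h (ipb_mem_x hP he1P).1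
          have hx2 : e.2.1 = qP.1 := by
            rcases lt_or_ge e.2.1 qP.1 with h | h
            · exact absurd ⟨e.2, he2P, he2Q, lt_of_lt_of_le hx.1 he2, h⟩ hint
            · exact le_antisymm (ipb_mem_x hP he2P).2 h
          obtain ⟨tP, hPs⟩ := ipb_shape hP
          obtain ⟨tQ, hQs⟩ := ipb_shape hQ
          have hXP := ipb_xinc hP
          have hXQ := ipb_xinc hQ
          rw [hPs] at hXP he1P
          rw [hQs] at hXQ he1Q
          have he1pP : e.1 = pP := eq_head_of_x_eq hXP he1P hx1
          have he1pQ : e.1 = pQ := eq_head_of_x_eq hXQ he1Q (by rw [hx1, hpp])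
          have he2qP : e.2 = qP := by
            have := eq_last_of_x_eq (ipb_xinc hP) hP.1 he2P (by rw [hx2, ipb_last_eq hP])
            rw [this, ipb_last_eq hP]
          have he2qQ : e.2 = qQ := by
            have := eq_last_of_x_eq (ipb_xinc hQ) hQ.1 he2Q
              (by rw [hx2, ipb_last_eq hQ, ← hqq])
            rw [this, ipb_last_eq hQ]
          have hPp : P = [e.1, e.2] := path_eq_pair (ipb_xinc hP)
            (by rw [show ((e.1 : ℝ × ℝ), (e.2 : ℝ × ℝ)) = e from rfl]; exact heP)
            (by rw [he1pP]; exact hP.2.2.1) (by rw [he2qP]; exact hP.2.2.2)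
          have hQp : Q = [e.1, e.2] := path_eq_pair (ipb_xinc hQ)
            (by rw [show ((e.1 : ℝ × ℝ), (e.2 : ℝ × ℝ)) = e from rfl]; exact heQ)
            (by rw [he1pQ]; exact hQ.2.2.1) (by rw [he2qQ]; exact hQ.2.2.2)
          exact hPQ (by rw [hPp, hQp])
      rcases sign_dichotomy (cont_ev (ipb_xinc hP)) (cont_ev (ipb_xinc hQ)) hpq key with hle | hle
      · refine ⟨P, Q, pP, qP, pQ, qQ, hP, hQ, Or.inl rfl, Or.inr rfl, Or.inl rfl, Or.inr rfl,
          rfl, ?_⟩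
        intro x h1 h2
        rw [min_eq_left (hle x ⟨h1, h2⟩), max_eq_right (hle x ⟨h1, h2⟩)]
        exact ⟨rfl, rfl⟩
      · refine ⟨Q, P, pQ, qQ, pP, qP, hQ, hP, Or.inr rfl, Or.inl rfl, Or.inr rfl, Or.inl rfl,
          by rw [add_comm], ?_⟩
        intro x h1 h2
        rw [min_eq_right (hle x ⟨h1, h2⟩), max_eq_left (hle x ⟨h1, h2⟩)]
        exact ⟨rfl, rfl⟩
/- ### Section F : comparators and sorting networks on paths -/

open scoped Classical

lemma cmp_exists (Γ : PlanarNetwork) (ε : (ℝ × ℝ) × (ℝ × ℝ) → ℝ) (P Q : List (ℝ × ℝ))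
    (hP : IsThroughPath Γ P) (hQ : IsThroughPath Γ Q) :
    ∃ R S : List (ℝ × ℝ), IsThroughPath Γ R ∧ IsThroughPath Γ S ∧
      pathWeight ε R + pathWeight ε S = pathWeight ε P + pathWeight ε Q ∧
      ∀ x, Γ.a ≤ x → x ≤ Γ.b →
        ev R x = min (ev P x) (ev Q x) ∧ ev S x = max (ev P x) (ev Q x) := by
  obtain ⟨pP, qP, hP', hpa, hqb⟩ := hP
  obtain ⟨pQ, qQ, hQ', hpa', hqb'⟩ := hQ
  obtain ⟨R, S, pR, qR, pS, qS, hR, hS, hpR, hpS, hqR, hqS, hw, hev⟩ :=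
    exch Γ ε (P.length + Q.length) P Q pP qP pQ qQ le_rfl hP' hQ'
      (by rw [hpa, hpa']) (by rw [hqb, hqb']) (by rw [hpa, hqb]; exact Γ.hab)
  refine ⟨R, S, ⟨pR, qR, hR, ?_, ?_⟩, ⟨pS, qS, hS, ?_, ?_⟩, hw, ?_⟩
  · rcases hpR with h | h <;> rw [h] <;> assumption
  · rcases hqR with h | h <;> rw [h] <;> assumption
  · rcases hpS with h | h <;> rw [h] <;> assumption
  · rcases hqS with h | h <;> rw [h] <;> assumption
  · intro x h1 h2
    exact hev x (by rw [hpa]; exact h1) (by rw [hqb]; exact h2)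

noncomputable def pcmp (Γ : PlanarNetwork) (ε : (ℝ × ℝ) × (ℝ × ℝ) → ℝ)
    (P Q : List (ℝ × ℝ)) : List (ℝ × ℝ) × List (ℝ × ℝ) :=
  if h : IsThroughPath Γ P ∧ IsThroughPath Γ Q then
    ⟨(cmp_exists Γ ε P Q h.1 h.2).choose, (cmp_exists Γ ε P Q h.1 h.2).choose_spec.choose⟩
  else (P, Q)

lemma cmp_spec (Γ : PlanarNetwork) (ε : (ℝ × ℝ) × (ℝ × ℝ) → ℝ) {P Q : List (ℝ × ℝ)}
    (hP : IsThroughPath Γ P) (hQ : IsThroughPath Γ Q) :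
    IsThroughPath Γ (pcmp Γ ε P Q).1 ∧ IsThroughPath Γ (pcmp Γ ε P Q).2 ∧
      pathWeight ε (pcmp Γ ε P Q).1 + pathWeight ε (pcmp Γ ε P Q).2
        = pathWeight ε P + pathWeight ε Q ∧
      ∀ x, Γ.a ≤ x → x ≤ Γ.b →
        ev (pcmp Γ ε P Q).1 x = min (ev P x) (ev Q x) ∧
        ev (pcmp Γ ε P Q).2 x = max (ev P x) (ev Q x) := by
  rw [pcmp, dif_pos ⟨hP, hQ⟩]
  have h := (cmp_exists Γ ε P Q hP hQ).choose_spec.choose_spec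
  exact ⟨h.1, h.2.1, h.2.2.1, h.2.2.2⟩

noncomputable def bub (Γ : PlanarNetwork) (ε : (ℝ × ℝ) × (ℝ × ℝ) → ℝ)
    (P : List (ℝ × ℝ)) : List (List (ℝ × ℝ)) → List (List (ℝ × ℝ))
  | [] => [P]
  | Q :: t => (pcmp Γ ε P Q).1 :: bub Γ ε (pcmp Γ ε P Q).2 t

noncomputable def srt (Γ : PlanarNetwork) (ε : (ℝ × ℝ) × (ℝ × ℝ) → ℝ) :
    List (List (ℝ × ℝ)) → List (List (ℝ × ℝ))
  | [] => []
  | P :: t => bub Γ ε P (srt Γ ε t)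

def bubR (c : ℝ) : List ℝ → List ℝ
  | [] => [c]
  | q :: t => min c q :: bubR (max c q) t

def srtR : List ℝ → List ℝ
  | [] => []
  | c :: t => bubR c (srtR t)

lemma bubR_perm : ∀ (l : List ℝ) (c : ℝ), (bubR c l).Perm (c :: l)
  | [], c => by simp [bubR]
  | q :: t, c => by
    rw [bubR]
    rcases le_total c q with h | h
    · rw [min_eq_left h, max_eq_right h]
      exact List.Perm.cons c (bubR_perm t q)
    · rw [min_eq_right h, max_eq_left h]
      exact ((bubR_perm t c).cons q).trans (List.Perm.swap c q t)

lemma bubR_sorted : ∀ (l : List ℝ) (c : ℝ), l.Pairwise (· ≤ ·) → (bubR c l).Pairwise (· ≤ ·)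
  | [], c, _ => by simp [bubR]
  | q :: t, c, h => by
    rw [bubR, List.pairwise_cons]
    constructor
    · intro y hy
      have hy' : y ∈ max c q :: t := (bubR_perm t (max c q)).mem_iff.1 hy
      rcases List.mem_cons.1 hy' with rfl | hy'
      · exact le_trans (min_le_left _ _) (le_max_left _ _)
      · exact le_trans (min_le_right _ _) ((List.pairwise_cons.1 h).1 y hy')
    · exact bubR_sorted t (max c q) (List.pairwise_cons.1 h).2

lemma srtR_perm : ∀ (l : List ℝ), (srtR l).Perm l
  | [] => by simp [srtR]
  | c :: t => by
    rw [srtR]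
    exact (bubR_perm (srtR t) c).trans (List.Perm.cons c (srtR_perm t))

lemma srtR_sorted : ∀ (l : List ℝ), (srtR l).Pairwise (· ≤ ·)
  | [] => by simp [srtR]
  | c :: t => by
    rw [srtR]
    exact bubR_sorted (srtR t) c (srtR_sorted t)

lemma bub_good (Γ : PlanarNetwork) (ε : (ℝ × ℝ) × (ℝ × ℝ) → ℝ) :
    ∀ (l : List (List (ℝ × ℝ))) (P : List (ℝ × ℝ)), IsThroughPath Γ P →
    (∀ L ∈ l, IsThroughPath Γ L) → ∀ L ∈ bub Γ ε P l, IsThroughPath Γ L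
  | [], P, hP, _, L, hL => by
    rw [bub] at hL
    simp only [List.mem_singleton] at hL
    rw [hL]; exact hP
  | Q :: t, P, hP, hl, L, hL => by
    have hQ : IsThroughPath Γ Q := hl Q (by simp)
    have hc := cmp_spec Γ ε hP hQ
    rw [bub] at hL
    rcases List.mem_cons.1 hL with rfl | hL
    · exact hc.1
    · exact bub_good Γ ε t (pcmp Γ ε P Q).2 hc.2.1 (fun L' hL' => hl L' (List.mem_cons_of_mem _ hL')) L hL

lemma bub_wsum (Γ : PlanarNetwork) (ε : (ℝ × ℝ) × (ℝ × ℝ) → ℝ) :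
    ∀ (l : List (List (ℝ × ℝ))) (P : List (ℝ × ℝ)), IsThroughPath Γ P →
    (∀ L ∈ l, IsThroughPath Γ L) →
    ((bub Γ ε P l).map (pathWeight ε)).sum = pathWeight ε P + (l.map (pathWeight ε)).sum
  | [], P, hP, _ => by simp [bub]
  | Q :: t, P, hP, hl => by
    have hQ : IsThroughPath Γ Q := hl Q (by simp)
    have hc := cmp_spec Γ ε hP hQ
    rw [bub]
    simp only [List.map_cons, List.sum_cons]
    rw [bub_wsum Γ ε t (pcmp Γ ε P Q).2 hc.2.1 (fun L' hL' => hl L' (List.mem_cons_of_mem _ hL'))]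
    have := hc.2.2.1
    linarith

lemma bub_map_ev (Γ : PlanarNetwork) (ε : (ℝ × ℝ) × (ℝ × ℝ) → ℝ) {x : ℝ}
    (hx1 : Γ.a ≤ x) (hx2 : x ≤ Γ.b) :
    ∀ (l : List (List (ℝ × ℝ))) (P : List (ℝ × ℝ)), IsThroughPath Γ P →
    (∀ L ∈ l, IsThroughPath Γ L) →
    (bub Γ ε P l).map (fun L => ev L x) = bubR (ev P x) (l.map (fun L => ev L x))
  | [], P, hP, _ => by simp [bub, bubR]
  | Q :: t, P, hP, hl => by
    have hQ : IsThroughPath Γ Q := hl Q (by simp)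
    have hc := cmp_spec Γ ε hP hQ
    rw [bub]
    simp only [List.map_cons]
    rw [bubR, bub_map_ev Γ ε hx1 hx2 t (pcmp Γ ε P Q).2 hc.2.1 (fun L' hL' => hl L' (List.mem_cons_of_mem _ hL')),
      (hc.2.2.2 x hx1 hx2).1, (hc.2.2.2 x hx1 hx2).2]

lemma srt_good (Γ : PlanarNetwork) (ε : (ℝ × ℝ) × (ℝ × ℝ) → ℝ) :
    ∀ (l : List (List (ℝ × ℝ))), (∀ L ∈ l, IsThroughPath Γ L) →
    ∀ L ∈ srt Γ ε l, IsThroughPath Γ L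
  | [], _, L, hL => by simp [srt] at hL
  | P :: t, hl, L, hL => by
    rw [srt] at hL
    exact bub_good Γ ε (srt Γ ε t) P (hl P (by simp))
      (srt_good Γ ε t (fun L' hL' => hl L' (List.mem_cons_of_mem _ hL'))) L hL

lemma srt_wsum (Γ : PlanarNetwork) (ε : (ℝ × ℝ) × (ℝ × ℝ) → ℝ) :
    ∀ (l : List (List (ℝ × ℝ))), (∀ L ∈ l, IsThroughPath Γ L) →
    ((srt Γ ε l).map (pathWeight ε)).sum = (l.map (pathWeight ε)).sum
  | [], _ => by simp [srt]
  | P :: t, hl => by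
    rw [srt, bub_wsum Γ ε (srt Γ ε t) P (hl P (by simp))
      (srt_good Γ ε t (fun L' hL' => hl L' (List.mem_cons_of_mem _ hL'))),
      srt_wsum Γ ε t (fun L' hL' => hl L' (List.mem_cons_of_mem _ hL'))]
    simp

lemma srt_map_ev (Γ : PlanarNetwork) (ε : (ℝ × ℝ) × (ℝ × ℝ) → ℝ) {x : ℝ}
    (hx1 : Γ.a ≤ x) (hx2 : x ≤ Γ.b) :
    ∀ (l : List (List (ℝ × ℝ))), (∀ L ∈ l, IsThroughPath Γ L) →
    (srt Γ ε l).map (fun L => ev L x) = srtR (l.map (fun L => ev L x))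
  | [], _ => by simp [srt, srtR]
  | P :: t, hl => by
    rw [srt]
    simp only [List.map_cons]
    rw [srtR, bub_map_ev Γ ε hx1 hx2 (srt Γ ε t) P (hl P (by simp))
      (srt_good Γ ε t (fun L' hL' => hl L' (List.mem_cons_of_mem _ hL'))),
      srt_map_ev Γ ε hx1 hx2 t (fun L' hL' => hl L' (List.mem_cons_of_mem _ hL'))]

lemma srt_length (Γ : PlanarNetwork) (ε : (ℝ × ℝ) × (ℝ × ℝ) → ℝ) (l : List (List (ℝ × ℝ)))
    (hl : ∀ L ∈ l, IsThroughPath Γ L) : (srt Γ ε l).length = l.length := by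
  have := srt_map_ev Γ ε (le_refl Γ.a) (le_of_lt Γ.hab) l hl
  have h1 := congrArg List.length this
  rw [List.length_map] at h1
  have h2 : (srtR (List.map (fun L => ev L Γ.a) l)).length = l.length := by
    rw [(srtR_perm _).length_eq]
    simp
  exact h1.trans h2
/- ### Section G : counting lemmas and the merge construction -/

lemma countP_ge_two {s : List ℝ} {r : ℕ} (h2 : r + 1 < s.length) (p : ℝ → Bool)
    (hp1 : p (s.get ⟨r, by omega⟩)) (hp2 : p (s.get ⟨r + 1, h2⟩)) : 2 ≤ s.countP p := by
  have hsplit : s.countP p = (s.take r).countP p + (s.drop r).countP p := by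
    rw [← List.countP_append, List.take_append_drop]
  have hd1 : s.drop r = s.get ⟨r, by omega⟩ :: s.drop (r + 1) :=
    List.drop_eq_getElem_cons (by omega)
  have hd2 : s.drop (r + 1) = s.get ⟨r + 1, h2⟩ :: s.drop (r + 2) :=
    List.drop_eq_getElem_cons h2
  rw [hsplit, hd1, hd2, List.countP_cons, List.countP_cons, if_pos hp1, if_pos hp2]
  omega

lemma countP_ge_three {s : List ℝ} {r : ℕ} (h3 : r + 2 < s.length) (p : ℝ → Bool)
    (hp1 : p (s.get ⟨r, by omega⟩)) (hp2 : p (s.get ⟨r + 1, by omega⟩))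
    (hp3 : p (s.get ⟨r + 2, h3⟩)) : 3 ≤ s.countP p := by
  have hsplit : s.countP p = (s.take r).countP p + (s.drop r).countP p := by
    rw [← List.countP_append, List.take_append_drop]
  have hd1 : s.drop r = s.get ⟨r, by omega⟩ :: s.drop (r + 1) :=
    List.drop_eq_getElem_cons (by omega)
  have hd2 : s.drop (r + 1) = s.get ⟨r + 1, by omega⟩ :: s.drop (r + 2) :=
    List.drop_eq_getElem_cons (by omega)
  have hd3 : s.drop (r + 2) = s.get ⟨r + 2, h3⟩ :: s.drop (r + 3) :=
    List.drop_eq_getElem_cons h3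
  rw [hsplit, hd1, hd2, hd3, List.countP_cons, List.countP_cons, List.countP_cons,
    if_pos hp1, if_pos hp2, if_pos hp3]
  omega

lemma countP_le_one_of_unique (p : ℝ → Bool) {l : List ℝ}
    (hl : List.Pairwise (· ≠ ·) l) (huniq : ∀ y ∈ l, p y → ∀ z ∈ l, p z → y = z) :
    l.countP p ≤ 1 := by
  rw [List.countP_eq_length_filter]
  rcases hfil : l.filter p with _ | ⟨a, _ | ⟨b, t⟩⟩
  · simp
  · simp
  · exfalso
    have hpair : List.Pairwise (· ≠ ·) (l.filter p) := hl.filter p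
    rw [hfil] at hpair
    have hab : a ≠ b := (List.pairwise_cons.1 hpair).1 b (by simp)
    have ha : a ∈ l ∧ p a := List.mem_filter.1 (by rw [hfil]; simp)
    have hb : b ∈ l ∧ p b := List.mem_filter.1 (by rw [hfil]; simp)
    exact hab (huniq a ha.1 ha.2 b hb.1 hb.2)

/-- two vertex-disjoint through paths never take the same value. -/
lemma pairwise_ne_ev (Γ : PlanarNetwork) {P Q : List (ℝ × ℝ)}
    (hP : IsThroughPath Γ P) (hQ : IsThroughPath Γ Q) (hdis : ∀ v ∈ P, v ∉ Q)
    {x : ℝ} (hx1 : Γ.a ≤ x) (hx2 : x ≤ Γ.b) : ev P x ≠ ev Q x := by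
  obtain ⟨pP, qP, hP', hpa, hqb⟩ := hP
  obtain ⟨pQ, qQ, hQ', hpa', hqb'⟩ := hQ
  intro heq
  have hab : pP.1 < qP.1 := by rw [hpa, hqb]; exact Γ.hab
  have hab' : pQ.1 < qQ.1 := by rw [hpa', hqb']; exact Γ.hab
  rcases eq_val Γ hP' hQ' hab hab' (by rw [hpa]; exact hx1) (by rw [hqb]; exact hx2)
    (by rw [hpa']; exact hx1) (by rw [hqb']; exact hx2) heq with
    ⟨w, hwP, hwQ, _⟩ | ⟨e, heP, heQ, _, _⟩
  · exact hdis w hwP hwQ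
  · exact hdis e.1 (mem_of_mem_edges_fst heP) (mem_of_mem_edges_fst heQ)

/-- endpoints of a through path are vertices of the network. -/
lemma ipb_ends_V (Γ : PlanarNetwork) {p q : ℝ × ℝ} {L : List (ℝ × ℝ)}
    (h : IsPathBetween Γ p q L) (hpq : p ≠ q) : p ∈ Γ.V ∧ q ∈ Γ.V := by
  obtain ⟨w, s, hL⟩ := ipb_shape2 h hpq
  have hc := h.2.1
  rw [hL] at hc
  have hpV : p ∈ Γ.V := (Γ.ends (p, w) (List.isChain_cons_cons.1 hc).1).1
  have hqmem : q ∈ (w :: s : List (ℝ × ℝ)) := by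
    have hm := ipb_last_mem h
    rw [hL] at hm
    rcases List.mem_cons.1 hm with h' | h'
    · exact absurd h'.symm hpq
    · exact h'
  obtain ⟨u, hu⟩ := mem_tail_edge (L := p :: w :: s) hqmem
  have : (u, q) ∈ Γ.E := chain'_edges hc (u, q) hu
  exact ⟨hpV, (Γ.ends (u, q) this).2.1⟩

/-- The merge construction: sorting the union of two disjoint families of bounded paths. -/
lemma merge_families (Γ : PlanarNetwork) (ε : (ℝ × ℝ) × (ℝ × ℝ) → ℝ) {p q : ℕ}
    (kA kB : ℕ) (FA : Fin p → List (ℝ × ℝ)) (FB : Fin q → List (ℝ × ℝ))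
    (hFA : ∀ j, IsBoundedPath Γ kA (FA j)) (hFB : ∀ j, IsBoundedPath Γ kB (FB j))
    (hdA : PairwiseVertexDisjoint FA) (hdB : PairwiseVertexDisjoint FB) :
    ∃ G : List (List (ℝ × ℝ)),
      G.length = p + q ∧
      (∀ L ∈ G, IsThroughPath Γ L) ∧
      ((G.map (pathWeight ε)).sum
        = (∑ j, pathWeight ε (FA j)) + ∑ j, pathWeight ε (FB j)) ∧
      (∀ x, Γ.a ≤ x → x ≤ Γ.b →
        (G.map (fun L => ev L x)).Pairwise (· ≤ ·) ∧
        (G.map (fun L => ev L x)).Perm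
          ((List.ofFn fun j => ev (FA j) x) ++ List.ofFn fun j => ev (FB j) x)) := by
  have hTA : ∀ j, IsThroughPath Γ (FA j) := by
    intro j
    obtain ⟨pp, qq, h1, h2, h3, _, _⟩ := hFA j
    exact ⟨pp, qq, h1, h2, h3⟩
  have hTB : ∀ j, IsThroughPath Γ (FB j) := by
    intro j
    obtain ⟨pp, qq, h1, h2, h3, _, _⟩ := hFB j
    exact ⟨pp, qq, h1, h2, h3⟩
  set LIN : List (List (ℝ × ℝ)) := (List.ofFn FA) ++ List.ofFn FB with hLIN
  have hLINgood : ∀ L ∈ LIN, IsThroughPath Γ L := by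
    intro L hL
    rcases List.mem_append.1 hL with h | h <;> rw [List.mem_ofFn] at h <;>
      obtain ⟨j, rfl⟩ := h
    · exact hTA j
    · exact hTB j
  refine ⟨srt Γ ε LIN, ?_, srt_good Γ ε LIN hLINgood, ?_, ?_⟩
  · rw [srt_length Γ ε LIN hLINgood, hLIN]
    simp
  · rw [srt_wsum Γ ε LIN hLINgood, hLIN]
    simp only [List.map_append, List.sum_append, List.map_ofFn]
    rw [List.sum_ofFn, List.sum_ofFn]
    rfl
  · intro x hx1 hx2
    rw [srt_map_ev Γ ε hx1 hx2 LIN hLINgood]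
    refine ⟨srtR_sorted _, ?_⟩
    have := srtR_perm (LIN.map (fun L => ev L x))
    refine this.trans ?_
    rw [hLIN]
    simp only [List.map_append, List.map_ofFn]
    rfl
/- ### Section H : final helper lemmas -/

lemma sorted_le_of_count {s : List ℝ} (hs : s.Pairwise (· ≤ ·)) {k : ℝ}
    (hcnt : s.countP (fun y => decide (k < y)) ≤ 1) {r : ℕ} (hr : r + 1 < s.length) :
    s.get ⟨r, by omega⟩ ≤ k := by
  by_contra hgt
  push_neg at hgt
  have h2 : k < s.get ⟨r + 1, hr⟩ :=
    lt_of_lt_of_le hgt (hs.rel_get_of_le (Fin.mk_le_mk.2 (by omega)))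
  have := countP_ge_two hr (fun y => decide (k < y)) (decide_eq_true hgt) (decide_eq_true h2)
  omega

lemma sorted_strict_gap {s : List ℝ} (hs : s.Pairwise (· ≤ ·)) {VA VB : List ℝ}
    (hperm : s.Perm (VA ++ VB)) (hA : VA.Pairwise (· ≠ ·)) (hB : VB.Pairwise (· ≠ ·))
    {r : ℕ} (hr : r + 2 < s.length) : s.get ⟨r, by omega⟩ < s.get ⟨r + 2, hr⟩ := by
  rcases lt_or_eq_of_le (hs.rel_get_of_le (Fin.mk_le_mk.2 (by omega) :
      (⟨r, by omega⟩ : Fin s.length) ≤ ⟨r + 2, hr⟩)) with h | h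
  · exact h
  · exfalso
    set v := s.get ⟨r, by omega⟩ with hv
    have hmid1 : v ≤ s.get ⟨r + 1, by omega⟩ := hs.rel_get_of_le (Fin.mk_le_mk.2 (by omega))
    have hmid2 : s.get ⟨r + 1, by omega⟩ ≤ s.get ⟨r + 2, hr⟩ :=
      hs.rel_get_of_le (Fin.mk_le_mk.2 (by omega))
    have hmid : s.get ⟨r + 1, by omega⟩ = v := le_antisymm (by rw [h]; exact hmid2) hmid1
    have h3 := countP_ge_three hr (fun y => decide (y = v)) (decide_eq_true rfl)
      (decide_eq_true hmid) (decide_eq_true h.symm)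
    rw [hperm.countP_eq, List.countP_append] at h3
    have hA1 : VA.countP (fun y => decide (y = v)) ≤ 1 :=
      countP_le_one_of_unique _ hA (fun y _ hy z _ hz => by
        rw [decide_eq_true_iff] at hy hz
        rw [hy, hz])
    have hB1 : VB.countP (fun y => decide (y = v)) ≤ 1 :=
      countP_le_one_of_unique _ hB (fun y _ hy z _ hz => by
        rw [decide_eq_true_iff] at hy hz
        rw [hy, hz])
    omega

lemma count_gt_le_one {m : ℕ} (k : ℕ) (vals : Fin m → ℝ)
    (hints : ∀ j, ∃ jj : ℕ, vals j = (jj : ℝ))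
    (hbound : ∀ j, vals j ≤ (k : ℝ) + 1)
    (hne : List.Pairwise (· ≠ ·) (List.ofFn vals)) :
    (List.ofFn vals).countP (fun y => decide ((k : ℝ) < y)) ≤ 1 := by
  refine countP_le_one_of_unique _ hne ?_
  intro y hy hky z hz hkz
  rw [decide_eq_true_iff] at hky hkz
  rw [List.mem_ofFn] at hy hz
  obtain ⟨j, rfl⟩ := hy
  obtain ⟨j', rfl⟩ := hz
  obtain ⟨jy, hjy⟩ := hints j
  obtain ⟨jz, hjz⟩ := hints j'
  have h1 : jy = k + 1 := by
    have b1 : (k : ℝ) < (jy : ℝ) := by rw [← hjy]; exact hky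
    have b2 : (jy : ℝ) ≤ (k : ℝ) + 1 := by rw [← hjy]; exact hbound j
    have c1 : k < jy := by exact_mod_cast b1
    have c2 : jy ≤ k + 1 := by exact_mod_cast b2
    omega
  have h2 : jz = k + 1 := by
    have b1 : (k : ℝ) < (jz : ℝ) := by rw [← hjz]; exact hkz
    have b2 : (jz : ℝ) ≤ (k : ℝ) + 1 := by rw [← hjz]; exact hbound j'
    have c1 : k < jz := by exact_mod_cast b1
    have c2 : jz ≤ k + 1 := by exact_mod_cast b2
    omega
  rw [hjy, hjz, h1, h2]

/-- endpoint data of a bounded path. -/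
lemma bounded_vals (Γ : PlanarNetwork) {k : ℕ} {L : List (ℝ × ℝ)}
    (h : IsBoundedPath Γ k L) :
    ev L Γ.a ≤ (k : ℝ) ∧ ev L Γ.b ≤ (k : ℝ) ∧
      (Γ.a, ev L Γ.a) ∈ Γ.V ∧ (Γ.b, ev L Γ.b) ∈ Γ.V := by
  obtain ⟨pp, qq, hipb, ha, hb, h2a, h2b⟩ := h
  have hne : pp ≠ qq := by
    intro hh
    rw [hh, hb] at ha
    exact absurd ha.symm (ne_of_lt Γ.hab)
  have hV := ipb_ends_V Γ hipb hne
  have heva : ev L Γ.a = pp.2 := by rw [← ha]; exact ipb_ev_head hipb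
  have hevb : ev L Γ.b = qq.2 := by rw [← hb]; exact ipb_ev_last hipb
  refine ⟨by rw [heva]; exact h2a, by rw [hevb]; exact h2b, ?_, ?_⟩
  · rw [show ((Γ.a, ev L Γ.a) : ℝ × ℝ) = pp from by rw [heva, ← ha]]
    exact hV.1
  · rw [show ((Γ.b, ev L Γ.b) : ℝ × ℝ) = qq from by rw [hevb, ← hb]]
    exact hV.2

lemma through_to_bounded (Γ : PlanarNetwork) {L : List (ℝ × ℝ)} (h : IsThroughPath Γ L)
    (k : ℕ) (ha : ev L Γ.a ≤ (k : ℝ)) (hb : ev L Γ.b ≤ (k : ℝ)) : IsBoundedPath Γ k L := by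
  obtain ⟨pp, qq, hipb, hpa, hqb⟩ := h
  refine ⟨pp, qq, hipb, hpa, hqb, ?_, ?_⟩
  · rw [← ipb_ev_head hipb, hpa]; exact ha
  · rw [← ipb_ev_last hipb, hqb]; exact hb

lemma sum_map_getD (l : List (List (ℝ × ℝ))) (f : List (ℝ × ℝ) → ℝ) :
    (l.map f).sum = ∑ r ∈ Finset.range l.length, f (l.getD r []) := by
  induction l with
  | nil => simp
  | cons a t ih =>
    simp only [List.map_cons, List.sum_cons, List.length_cons]
    rw [Finset.sum_range_succ', ih]
    simp [List.getD]
    ring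

lemma sum_even_odd (m : ℕ) (f : ℕ → ℝ) :
    ∑ r ∈ Finset.range (2 * m), f r
      = ∑ j ∈ Finset.range m, f (2 * j) + ∑ j ∈ Finset.range m, f (2 * j + 1) := by
  induction m with
  | zero => simp
  | succ m ih =>
    rw [show 2 * (m + 1) = (2 * m + 1) + 1 by ring, Finset.sum_range_succ,
      Finset.sum_range_succ, Finset.sum_range_succ (fun j => f (2 * j)),
      Finset.sum_range_succ (fun j => f (2 * j + 1)), ih]
    ring

lemma sum_odd (m : ℕ) (f : ℕ → ℝ) :
    ∑ r ∈ Finset.range (2 * m + 1), f r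
      = ∑ j ∈ Finset.range (m + 1), f (2 * j) + ∑ j ∈ Finset.range m, f (2 * j + 1) := by
  induction m with
  | zero => simp
  | succ m ih =>
    rw [show 2 * (m + 1) + 1 = (2 * m + 1) + 1 + 1 by ring, Finset.sum_range_succ,
      Finset.sum_range_succ, Finset.sum_range_succ (fun j => f (2 * j)),
      Finset.sum_range_succ (fun j => f (2 * j + 1)), ih]
    have : 2 * (m + 1) = 2 * m + 1 + 1 := by ring
    rw [this]
    ring
/- ### Section I : extraction of subfamilies -/

lemma bounded_to_through {Γ : PlanarNetwork} {k : ℕ} {L : List (ℝ × ℝ)}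
    (h : IsBoundedPath Γ k L) : IsThroughPath Γ L := by
  obtain ⟨pp, qq, h1, h2, h3, _, _⟩ := h
  exact ⟨pp, qq, h1, h2, h3⟩

lemma getD_map_ev {G : List (List (ℝ × ℝ))} {x : ℝ} {r : ℕ} (hr : r < G.length) :
    ev (G.getD r []) x = (G.map (fun L => ev L x)).get ⟨r, by simpa using hr⟩ := by
  rw [List.getD_eq_getElem _ _ hr]; simp

lemma extract (Γ : PlanarNetwork) (ε : (ℝ × ℝ) × (ℝ × ℝ) → ℝ) (G : List (List (ℝ × ℝ)))
    (hgood : ∀ L ∈ G, IsThroughPath Γ L)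
    (hgap : ∀ x, Γ.a ≤ x → x ≤ Γ.b → ∀ r : ℕ, r + 2 < G.length →
      ev (G.getD r []) x < ev (G.getD (r + 2) []) x)
    (hmono : ∀ x, Γ.a ≤ x → x ≤ Γ.b → ∀ r r' : ℕ, r ≤ r' → r' < G.length →
      ev (G.getD r []) x ≤ ev (G.getD r' []) x)
    (m off k' : ℕ)
    (hidx : ∀ j, j < m → 2 * j + off < G.length)
    (hbnd : ∀ j, j < m → ev (G.getD (2 * j + off) []) Γ.a ≤ (k' : ℝ) ∧
      ev (G.getD (2 * j + off) []) Γ.b ≤ (k' : ℝ)) :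
    (∑ j : Fin m, pathWeight ε (G.getD (2 * (j : ℕ) + off) []))
      ∈ boundedWeights Γ ε m k' := by
  set F : Fin m → List (ℝ × ℝ) := fun j => G.getD (2 * (j : ℕ) + off) [] with hF
  have hmem : ∀ j : Fin m, F j ∈ G := by
    intro j
    rw [hF]
    simp only
    rw [List.getD_eq_getElem _ _ (hidx j j.2)]
    exact List.getElem_mem _
  have hthrough : ∀ j, IsThroughPath Γ (F j) := fun j => hgood (F j) (hmem j)
  have hstrict : ∀ (j j' : Fin m), j < j' → ∀ x, Γ.a ≤ x → x ≤ Γ.b →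
      ev (F j) x < ev (F j') x := by
    intro j j' hjj x hx1 hx2
    have hj' := hidx j' j'.2
    have h1 : ev (G.getD (2 * (j : ℕ) + off) []) x
        < ev (G.getD (2 * (j : ℕ) + off + 2) []) x :=
      hgap x hx1 hx2 _ (by omega)
    have h2 : ev (G.getD (2 * (j : ℕ) + off + 2) []) x
        ≤ ev (G.getD (2 * (j' : ℕ) + off) []) x :=
      hmono x hx1 hx2 _ _ (by omega) hj'
    exact lt_of_lt_of_le h1 h2
  refine ⟨F, ?_, ?_, rfl⟩
  · intro j
    exact through_to_bounded Γ (hthrough j) k' (hbnd j j.2).1 (hbnd j j.2).2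
  · intro j j' hjj v hv hv'
    obtain ⟨pj, qj, hipbj, haj, hbj⟩ := hthrough j
    obtain ⟨pj', qj', hipbj', haj', hbj'⟩ := hthrough j'
    have hx : Γ.a ≤ v.1 ∧ v.1 ≤ Γ.b := by
      have := ipb_mem_x hipbj hv
      rw [haj] at this
      rw [hbj] at this
      exact this
    have hevj : ev (F j) v.1 = v.2 := ev_vertex (ipb_xinc hipbj) hv
    have hevj' : ev (F j') v.1 = v.2 := ev_vertex (ipb_xinc hipbj') hv'
    rcases lt_or_gt_of_ne hjj with h | h
    · have := hstrict j j' h v.1 hx.1 hx.2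
      rw [hevj, hevj'] at this
      exact lt_irrefl _ this
    · have := hstrict j' j h v.1 hx.1 hx.2
      rw [hevj, hevj'] at this
      exact lt_irrefl _ this
/- ### Section J : the combined setup lemma -/

lemma setup (Γ : PlanarNetwork) (n : ℕ) (hΓ : Γ.HasRank n) (ε : (ℝ × ℝ) × (ℝ × ℝ) → ℝ)
    {pA pB : ℕ} {K kA kB : ℕ}
    (hK : (kA = K ∧ kB = K + 1) ∨ (kA = K + 1 ∧ kB = K))
    (FA : Fin pA → List (ℝ × ℝ)) (FB : Fin pB → List (ℝ × ℝ))
    (hFA : ∀ j, IsBoundedPath Γ kA (FA j)) (hFB : ∀ j, IsBoundedPath Γ kB (FB j))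
    (hdA : PairwiseVertexDisjoint FA) (hdB : PairwiseVertexDisjoint FB) :
    ∃ G : List (List (ℝ × ℝ)),
      G.length = pA + pB ∧
      (∀ L ∈ G, IsThroughPath Γ L) ∧
      ((G.map (pathWeight ε)).sum
        = (∑ j, pathWeight ε (FA j)) + ∑ j, pathWeight ε (FB j)) ∧
      (∀ x, Γ.a ≤ x → x ≤ Γ.b → ∀ r : ℕ, r + 2 < G.length →
        ev (G.getD r []) x < ev (G.getD (r + 2) []) x) ∧
      (∀ x, Γ.a ≤ x → x ≤ Γ.b → ∀ r r' : ℕ, r ≤ r' → r' < G.length →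
        ev (G.getD r []) x ≤ ev (G.getD r' []) x) ∧
      (∀ r : ℕ, r < G.length →
        ev (G.getD r []) Γ.a ≤ (K : ℝ) + 1 ∧ ev (G.getD r []) Γ.b ≤ (K : ℝ) + 1) ∧
      (∀ r : ℕ, r + 1 < G.length →
        ev (G.getD r []) Γ.a ≤ (K : ℝ) ∧ ev (G.getD r []) Γ.b ≤ (K : ℝ)) := by
  obtain ⟨G, hlen, hgood, hwsum, hSP⟩ := merge_families Γ ε kA kB FA FB hFA hFB hdA hdB
  have hTA : ∀ j, IsThroughPath Γ (FA j) := fun j => bounded_to_through (hFA j)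
  have hTB : ∀ j, IsThroughPath Γ (FB j) := fun j => bounded_to_through (hFB j)
  have hVA : ∀ x, Γ.a ≤ x → x ≤ Γ.b →
      List.Pairwise (· ≠ ·) (List.ofFn fun j => ev (FA j) x) := by
    intro x hx1 hx2
    exact List.pairwise_ofFn.2 fun i j hij =>
      pairwise_ne_ev Γ (hTA i) (hTA j) (hdA i j (ne_of_lt hij)) hx1 hx2
  have hVB : ∀ x, Γ.a ≤ x → x ≤ Γ.b →
      List.Pairwise (· ≠ ·) (List.ofFn fun j => ev (FB j) x) := by
    intro x hx1 hx2
    exact List.pairwise_ofFn.2 fun i j hij =>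
      pairwise_ne_ev Γ (hTB i) (hTB j) (hdB i j (ne_of_lt hij)) hx1 hx2
  have hKA1 : (kA : ℝ) ≤ (K : ℝ) + 1 := by
    rcases hK with ⟨h1, _⟩ | ⟨h1, _⟩ <;> rw [h1] <;> push_cast <;> linarith
  have hKB1 : (kB : ℝ) ≤ (K : ℝ) + 1 := by
    rcases hK with ⟨_, h1⟩ | ⟨_, h1⟩ <;> rw [h1] <;> push_cast <;> linarith
  refine ⟨G, hlen, hgood, hwsum, ?_, ?_, ?_, ?_⟩
  · -- strict gap
    intro x hx1 hx2 r hr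
    rw [getD_map_ev (show r < G.length by omega), getD_map_ev (show r + 2 < G.length from hr)]
    exact sorted_strict_gap (hSP x hx1 hx2).1 (hSP x hx1 hx2).2 (hVA x hx1 hx2) (hVB x hx1 hx2)
      (by simpa using hr)
  · -- monotone
    intro x hx1 hx2 r r' hrr hr'
    rw [getD_map_ev (show r < G.length by omega), getD_map_ev hr']
    exact (hSP x hx1 hx2).1.rel_get_of_le (Fin.mk_le_mk.2 hrr)
  · -- all values ≤ K + 1
    intro r hr
    have key : ∀ x, Γ.a ≤ x → x ≤ Γ.b →
        (∀ j, ev (FA j) x ≤ (K : ℝ) + 1) → (∀ j, ev (FB j) x ≤ (K : ℝ) + 1) →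
        ev (G.getD r []) x ≤ (K : ℝ) + 1 := by
      intro x hx1 hx2 hA hB
      rw [getD_map_ev hr]
      have hmem := List.get_mem (G.map fun L => ev L x) ⟨r, by simpa using hr⟩
      have hmem' := (hSP x hx1 hx2).2.mem_iff.1 hmem
      rcases List.mem_append.1 hmem' with h | h <;> rw [List.mem_ofFn] at h <;>
        obtain ⟨j, hj⟩ := h <;> rw [← hj]
      · exact hA j
      · exact hB j
    constructor
    · exact key Γ.a (le_refl _) Γ.hab.le
        (fun j => le_trans (bounded_vals Γ (hFA j)).1 hKA1)
        (fun j => le_trans (bounded_vals Γ (hFB j)).1 hKB1)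
    · exact key Γ.b Γ.hab.le (le_refl _)
        (fun j => le_trans (bounded_vals Γ (hFA j)).2.1 hKA1)
        (fun j => le_trans (bounded_vals Γ (hFB j)).2.1 hKB1)
  · -- second-largest values ≤ K
    intro r hr
    have key : ∀ x, Γ.a ≤ x → x ≤ Γ.b →
        (∀ pp ∈ Γ.V, pp.1 = x → ∃ jj : ℕ, 1 ≤ jj ∧ jj ≤ n ∧ pp.2 = (jj : ℝ)) →
        (∀ j, (x, ev (FA j) x) ∈ Γ.V) → (∀ j, (x, ev (FB j) x) ∈ Γ.V) →
        (∀ j, ev (FA j) x ≤ (kA : ℝ)) → (∀ j, ev (FB j) x ≤ (kB : ℝ)) →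
        ev (G.getD r []) x ≤ (K : ℝ) := by
      intro x hx1 hx2 hint hVAx hVBx hbA hbB
      have hcnt : ((G.map fun L => ev L x)).countP (fun y => decide ((K : ℝ) < y)) ≤ 1 := by
        rw [(hSP x hx1 hx2).2.countP_eq, List.countP_append]
        have hzero : ∀ (mm : ℕ) (F : Fin mm → List (ℝ × ℝ)) (kk : ℕ), kk = K →
            (∀ j, ev (F j) x ≤ (kk : ℝ)) →
            (List.ofFn fun j => ev (F j) x).countP (fun y => decide ((K : ℝ) < y)) = 0 := by
          intro mm F kk hkk hb
          rw [List.countP_eq_zero.2]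
          intro y hy
          rw [List.mem_ofFn] at hy
          obtain ⟨j, rfl⟩ := hy
          simp only [decide_eq_true_iff, not_lt]
          exact le_trans (hb j) (by rw [hkk])
        have hone : ∀ (mm : ℕ) (F : Fin mm → List (ℝ × ℝ)) (kk : ℕ), kk = K + 1 →
            (∀ j, ev (F j) x ≤ (kk : ℝ)) → (∀ j, (x, ev (F j) x) ∈ Γ.V) →
            List.Pairwise (· ≠ ·) (List.ofFn fun j => ev (F j) x) →
            (List.ofFn fun j => ev (F j) x).countP (fun y => decide ((K : ℝ) < y)) ≤ 1 := by
          intro mm F kk hkk hb hVx hpw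
          refine count_gt_le_one K _ ?_ ?_ hpw
          · intro j
            obtain ⟨jj, _, _, hjj⟩ := hint (x, ev (F j) x) (hVx j) rfl
            exact ⟨jj, hjj⟩
          · intro j
            refine le_trans (hb j) ?_
            rw [hkk]; push_cast; linarith
        rcases hK with ⟨h1, h2⟩ | ⟨h1, h2⟩
        · have cA := hzero pA FA kA h1 hbA
          have cB := hone pB FB kB h2 hbB hVBx (hVB x hx1 hx2)
          omega
        · have cA := hone pA FA kA h1 hbA hVAx (hVA x hx1 hx2)
          have cB := hzero pB FB kB h2 hbB
          omega
      rw [getD_map_ev (show r < G.length by omega)]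
      exact sorted_le_of_count (hSP x hx1 hx2).1 hcnt (by simpa using hr)
    constructor
    · exact key Γ.a (le_refl _) Γ.hab.le (fun pp hpp hx => hΓ.1 pp hpp hx)
        (fun j => (bounded_vals Γ (hFA j)).2.2.1) (fun j => (bounded_vals Γ (hFB j)).2.2.1)
        (fun j => (bounded_vals Γ (hFA j)).1) (fun j => (bounded_vals Γ (hFB j)).1)
    · exact key Γ.b Γ.hab.le (le_refl _) (fun pp hpp hx => hΓ.2.1 pp hpp hx)
        (fun j => (bounded_vals Γ (hFA j)).2.2.2) (fun j => (bounded_vals Γ (hFB j)).2.2.2)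
        (fun j => (bounded_vals Γ (hFA j)).2.1) (fun j => (bounded_vals Γ (hFB j)).2.1)

/-- Interlacing of tropical eigenvalues: for a rank-`n`
weighted planar network `Γ`, with `t i k = l_i Γ^{(k)}(ε)` (assumed finite,
i.e. greatest elements of the sets of multipath weights), the differences
`λ_i^{(k)} = t i k − t (i-1) k` satisfy
`λ_i^{(k+1)} ≥ λ_i^{(k)} ≥ λ_{i+1}^{(k+1)}` for all `0 < i ≤ k < n`. -/
theorem tropical_eigenvalues_interlace (n : ℕ) (Γ : PlanarNetwork)
    (hΓ : Γ.HasRank n) (ε : (ℝ × ℝ) × (ℝ × ℝ) → ℝ) (t : ℕ → ℕ → ℝ)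
    (ht : ∀ k, k ≤ n → ∀ i, i ≤ k → IsGreatest (boundedWeights Γ ε i k) (t i k))
    (lam : ℕ → ℕ → ℝ) (hlam : ∀ i k, lam i k = t i k - t (i - 1) k) :
    ∀ i k, 0 < i → i ≤ k → k < n →
      lam i (k + 1) ≥ lam i k ∧ lam i k ≥ lam (i + 1) (k + 1) := by
  
  intro i k hi hik hkn
  obtain ⟨m, rfl⟩ : ∃ m, i = m + 1 := ⟨i - 1, by omega⟩
  have hkn' : k ≤ n := le_of_lt hkn
  have hk1n : k + 1 ≤ n := hkn
  have H1 : t (m + 1) (k + 1) - t m (k + 1) ≥ t (m + 1) k - t m k := by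
    obtain ⟨FA, hFA, hdA, hsA⟩ := (ht k hkn' (m + 1) hik).1
    obtain ⟨FB, hFB, hdB, hsB⟩ := (ht (k + 1) hk1n m (by omega)).1
    obtain ⟨G, hlen, hgood, hwsum, hgap, hmono, hall, hsec⟩ :=
      setup Γ n hΓ ε (K := k) (Or.inl ⟨rfl, rfl⟩) FA FB hFA hFB hdA hdB
    have hNs : G.length = 2 * m + 1 := by rw [hlen]; omega
    have hC := extract Γ ε G hgood hgap hmono (m + 1) 0 (k + 1)
      (fun j hj => by omega)
      (fun j hj => by
        have h := hall (2 * j + 0) (by omega)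
        push_cast
        exact h)
    have hD := extract Γ ε G hgood hgap hmono m 1 k
      (fun j hj => by omega)
      (fun j hj => hsec (2 * j + 1) (by omega))
    have hCle := (ht (k + 1) hk1n (m + 1) (by omega)).2 hC
    have hDle := (ht k hkn' m (by omega)).2 hD
    have e1 : (∑ j : Fin (m + 1), pathWeight ε (G.getD (2 * (j : ℕ) + 0) []))
        = ∑ r ∈ Finset.range (m + 1), pathWeight ε (G.getD (2 * r) []) := by
      rw [Fin.sum_univ_eq_sum_range (fun r => pathWeight ε (G.getD (2 * r + 0) [])) (m + 1)]
      simp only [Nat.add_zero]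
    have e2 : (∑ j : Fin m, pathWeight ε (G.getD (2 * (j : ℕ) + 1) []))
        = ∑ r ∈ Finset.range m, pathWeight ε (G.getD (2 * r + 1) []) :=
      Fin.sum_univ_eq_sum_range (fun r => pathWeight ε (G.getD (2 * r + 1) [])) m
    have hsplit : (∑ j : Fin (m + 1), pathWeight ε (G.getD (2 * (j : ℕ) + 0) []))
        + (∑ j : Fin m, pathWeight ε (G.getD (2 * (j : ℕ) + 1) []))
        = t (m + 1) k + t m (k + 1) := by
      rw [e1, e2, ← sum_odd m (fun r => pathWeight ε (G.getD r [])), ← hNs,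
        ← sum_map_getD G (pathWeight ε), hwsum, ← hsA, ← hsB]
    linarith
  have H2 : t (m + 1) k - t m k ≥ t (m + 2) (k + 1) - t (m + 1) (k + 1) := by
    obtain ⟨FA, hFA, hdA, hsA⟩ := (ht (k + 1) hk1n (m + 2) (by omega)).1
    obtain ⟨FB, hFB, hdB, hsB⟩ := (ht k hkn' m (by omega)).1
    obtain ⟨G, hlen, hgood, hwsum, hgap, hmono, hall, hsec⟩ :=
      setup Γ n hΓ ε (K := k) (Or.inr ⟨rfl, rfl⟩) FA FB hFA hFB hdA hdB
    have hNs : G.length = 2 * m + 2 := by rw [hlen]; omega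
    have hC := extract Γ ε G hgood hgap hmono (m + 1) 0 k
      (fun j hj => by omega)
      (fun j hj => hsec (2 * j + 0) (by omega))
    have hD := extract Γ ε G hgood hgap hmono (m + 1) 1 (k + 1)
      (fun j hj => by omega)
      (fun j hj => by
        have h := hall (2 * j + 1) (by omega)
        push_cast
        exact h)
    have hCle := (ht k hkn' (m + 1) hik).2 hC
    have hDle := (ht (k + 1) hk1n (m + 1) (by omega)).2 hD
    have e1 : (∑ j : Fin (m + 1), pathWeight ε (G.getD (2 * (j : ℕ) + 0) []))
        = ∑ r ∈ Finset.range (m + 1), pathWeight ε (G.getD (2 * r) []) := by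
      rw [Fin.sum_univ_eq_sum_range (fun r => pathWeight ε (G.getD (2 * r + 0) [])) (m + 1)]
      simp only [Nat.add_zero]
    have e2 : (∑ j : Fin (m + 1), pathWeight ε (G.getD (2 * (j : ℕ) + 1) []))
        = ∑ r ∈ Finset.range (m + 1), pathWeight ε (G.getD (2 * r + 1) []) :=
      Fin.sum_univ_eq_sum_range (fun r => pathWeight ε (G.getD (2 * r + 1) [])) (m + 1)
    have hsplit : (∑ j : Fin (m + 1), pathWeight ε (G.getD (2 * (j : ℕ) + 0) []))
        + (∑ j : Fin (m + 1), pathWeight ε (G.getD (2 * (j : ℕ) + 1) []))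
        = t (m + 2) (k + 1) + t m k := by
      rw [e1, e2, ← sum_even_odd (m + 1) (fun r => pathWeight ε (G.getD r [])),
        show 2 * (m + 1) = G.length by omega,
        ← sum_map_getD G (pathWeight ε), hwsum, ← hsA, ← hsB]
    linarith
  constructor
  · rw [hlam, hlam]
    simp only [Nat.add_sub_cancel]
    exact H1
  · rw [hlam, hlam]
    simp only [Nat.add_sub_cancel, show m + 1 + 1 = m + 2 from rfl]
    exact H2
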